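/- In any simple graph G, the number of subgraphs isomorphic to the disjoint union of a triangle and an edge equals (1/3) ∑_{st∈E} ∑_{u∈Γ(s)∩Γ(t)} (m - k_s - k_t - k_u + 3). -/

import Mathlib

open Finset BigOperators SimpleGraph

namespace CrossVar

variable {V : Type} [Fintype V] [DecidableEq V]

/-- Adjacency indicator `a_{xy}`. -/
def a (G : SimpleGraph V) [DecidableRel G.Adj] (x y : V) : ℚ := if G.Adj x y then 1 else 0

/-- Degree `k_v` as a rational number. -/
def deg (G : SimpleGraph V) [DecidableRel G.Adj] (v : V) : ℚ := (G.degree v : ℚ)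

/-- Sum over the set `Q` of unordered pairs `{st, uv}` of vertex-disjoint (independent) edges of
`G` of a function `f s t u v` (intended to be invariant under `s ↔ t`, `u ↔ v` and
`(s,t) ↔ (u,v)`).  Each unordered pair of independent edges corresponds to exactly `8` ordered
tuples `(s,t,u,v)`, whence the division by `8`. -/
def Qsum (G : SimpleGraph V) [DecidableRel G.Adj] (f : V → V → V → V → ℚ) : ℚ :=
  (∑ s, ∑ t, ∑ u, ∑ v,
    if G.Adj s t ∧ G.Adj u v ∧ s ≠ u ∧ s ≠ v ∧ t ≠ u ∧ t ≠ v then f s t u v else 0) / 8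

/-- Sum over the unordered edges `{s,t} ∈ E` of `f s t` (intended for symmetric `f`);
each unordered edge corresponds to two ordered adjacent pairs, whence the division by `2`. -/
def edgeSum (G : SimpleGraph V) [DecidableRel G.Adj] (f : V → V → ℚ) : ℚ :=
  (∑ s, ∑ t, if G.Adj s t then f s t else 0) / 2

/-- The number of subgraphs of `G` isomorphic to `F` (each unlabeled copy counted once). -/
noncomputable def copyCount {α : Type} (G : SimpleGraph V) (F : SimpleGraph α) : ℕ :=
  Nat.card {H : G.Subgraph // Nonempty (H.coe ≃g F)}

/-- `ξ(v)`: the sum of the degrees of the neighbours of `v`. -/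
def xi (G : SimpleGraph V) [DecidableRel G.Adj] (v : V) : ℚ :=
  ∑ u ∈ G.neighborFinset v, deg G u

/-- The paw graph: a triangle `{0,1,2}` with a pendant edge `{2,3}`. -/
def pawGraph : SimpleGraph (Fin 4) :=
  SimpleGraph.fromRel (fun x y => (x, y) ∈ [((0 : Fin 4), (1 : Fin 4)), (0, 2), (1, 2), (2, 3)])

/-- `C₃ ⊕ P₂`: the disjoint union of a triangle `{0,1,2}` and an edge `{3,4}`. -/
def triEdgeGraph : SimpleGraph (Fin 5) :=
  SimpleGraph.fromRel (fun x y => (x, y) ∈ [((0 : Fin 5), (1 : Fin 5)), (0, 2), (1, 2), (3, 4)])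

instance : DecidableRel triEdgeGraph.Adj := fun x y =>
  decidable_of_iff _ (SimpleGraph.fromRel_adj _ x y).symm

/-- The subgraph determined by a triangle `T` and an edge `e`. -/
def pairSub (G : SimpleGraph V) (T : Finset V) (e : Sym2 V)
    (hT : G.IsNClique 3 T) (he : e ∈ G.edgeSet) : G.Subgraph where
  verts := ↑T ∪ {v | v ∈ e}
  Adj x y := (x ∈ T ∧ y ∈ T ∧ x ≠ y) ∨ e = s(x, y)
  adj_sub := by
    rintro x y (⟨hx, hy, hxy⟩ | rfl)
    · exact hT.1 hx hy hxy
    · exact he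
  edge_vert := by
    rintro x y (⟨hx, _, _⟩ | rfl)
    · exact Or.inl hx
    · exact Or.inr (Sym2.mem_mk_left x y)
  symm := by
    constructor
    rintro x y (⟨hx, hy, hxy⟩ | rfl)
    · exact Or.inl ⟨hy, hx, hxy.symm⟩
    · exact Or.inr (Sym2.eq_swap)

omit [Fintype V] in
lemma pairSub_iso (G : SimpleGraph V) (T : Finset V) (e : Sym2 V)
    (hT : G.IsNClique 3 T) (he : e ∈ G.edgeSet) (hdisj : ∀ v ∈ e, v ∉ T) :
    Nonempty ((pairSub G T e hT he).coe ≃g triEdgeGraph) := by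
  induction e using Sym2.ind with
  | _ d f =>
  obtain ⟨a, b, c, hab', hac', hbc', rfl⟩ := is3Clique_iff.mp hT
  have hab := hab'.ne
  have hac := hac'.ne
  have hbc := hbc'.ne
  have hdf : d ≠ f := (G.mem_edgeSet.mp he).ne
  have hdT : d ∉ ({a, b, c} : Finset V) := hdisj d (by simp)
  have hfT : f ∉ ({a, b, c} : Finset V) := hdisj f (by simp)
  have had : a ≠ d := by rintro rfl; exact hdT (by simp)
  have hbd : b ≠ d := by rintro rfl; exact hdT (by simp)
  have hcd : c ≠ d := by rintro rfl; exact hdT (by simp)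
  have haf : a ≠ f := by rintro rfl; exact hfT (by simp)
  have hbf : b ≠ f := by rintro rfl; exact hfT (by simp)
  have hcf : c ≠ f := by rintro rfl; exact hfT (by simp)
  set H := pairSub G {a, b, c} s(d, f) hT he with hH
  let g : Fin 5 → ↑H.verts := fun i =>
    ⟨![a, b, c, d, f] i, by
      fin_cases i <;> simp [hH, pairSub]⟩
  have hginj : Function.Injective g := by
    intro i j hij
    have : (![a, b, c, d, f] : Fin 5 → V) i = ![a, b, c, d, f] j := congrArg Subtype.val hij
    fin_cases i <;> fin_cases j <;> simp_all
  have hgsurj : Function.Surjective g := by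
    rintro ⟨x, hx⟩
    have : x = a ∨ x = b ∨ x = c ∨ x = d ∨ x = f := by
      simpa [hH, pairSub, or_assoc] using hx
    rcases this with rfl | rfl | rfl | rfl | rfl
    · exact ⟨0, Subtype.ext rfl⟩
    · exact ⟨1, Subtype.ext rfl⟩
    · exact ⟨2, Subtype.ext rfl⟩
    · exact ⟨3, Subtype.ext rfl⟩
    · exact ⟨4, Subtype.ext rfl⟩
  refine ⟨(RelIso.mk (Equiv.ofBijective g ⟨hginj, hgsurj⟩) ?_ : triEdgeGraph ≃g H.coe).symm⟩
  intro i j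
  show H.coe.Adj (g i) (g j) ↔ triEdgeGraph.Adj i j
  fin_cases i <;> fin_cases j <;>
    simp [g, hH, pairSub, triEdgeGraph, SimpleGraph.Subgraph.coe_adj, Sym2.eq_iff,
      hab, hac, hbc, hdf, had, hbd, hcd, haf, hbf, hcf,
      hab.symm, hac.symm, hbc.symm, hdf.symm, had.symm, hbd.symm, hcd.symm,
      haf.symm, hbf.symm, hcf.symm]

omit [Fintype V] in
lemma mem_T_iff (G : SimpleGraph V) (T : Finset V) (e : Sym2 V)
    (hT : G.IsNClique 3 T) (he : e ∈ G.edgeSet) (v : V) :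
    v ∈ T ↔ ∃ x y, x ≠ y ∧ (pairSub G T e hT he).Adj v x ∧ (pairSub G T e hT he).Adj v y := by
  constructor
  · intro hv
    have hcard : 1 < (T.erase v).card := by
      rw [Finset.card_erase_of_mem hv, hT.2]
      norm_num
    obtain ⟨x, hx, y, hy, hxy⟩ := Finset.one_lt_card.mp hcard
    exact ⟨x, y, hxy,
      Or.inl ⟨hv, Finset.mem_of_mem_erase hx, (Finset.ne_of_mem_erase hx).symm⟩,
      Or.inl ⟨hv, Finset.mem_of_mem_erase hy, (Finset.ne_of_mem_erase hy).symm⟩⟩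
  · rintro ⟨x, y, hxy, hvx, hvy⟩
    by_contra hv
    rcases hvx with ⟨hv', _, _⟩ | hex
    · exact hv hv'
    rcases hvy with ⟨hv', _, _⟩ | hey
    · exact hv hv'
    exact hxy (Sym2.congr_right.mp (hex ▸ hey))

omit [Fintype V] in
lemma pairSub_inj (G : SimpleGraph V) (T T' : Finset V) (e e' : Sym2 V)
    (hT : G.IsNClique 3 T) (he : e ∈ G.edgeSet) (hdisj : ∀ v ∈ e, v ∉ T)
    (hT' : G.IsNClique 3 T') (he' : e' ∈ G.edgeSet) (hdisj' : ∀ v ∈ e', v ∉ T')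
    (h : pairSub G T e hT he = pairSub G T' e' hT' he') : T = T' ∧ e = e' := by
  have hAdj : ∀ x y, (pairSub G T e hT he).Adj x y ↔ (pairSub G T' e' hT' he').Adj x y := by
    intro x y; rw [h]
  have hTT : T = T' := by
    ext v
    rw [mem_T_iff G T e hT he v, mem_T_iff G T' e' hT' he' v]
    constructor
    · rintro ⟨x, y, hxy, h1, h2⟩
      exact ⟨x, y, hxy, (hAdj v x).mp h1, (hAdj v y).mp h2⟩
    · rintro ⟨x, y, hxy, h1, h2⟩
      exact ⟨x, y, hxy, (hAdj v x).mpr h1, (hAdj v y).mpr h2⟩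
  subst hTT
  refine ⟨rfl, ?_⟩
  induction e using Sym2.ind with
  | _ d f =>
  have hdf : (pairSub G T s(d,f) hT he).Adj d f := Or.inr rfl
  have := (hAdj d f).mp hdf
  rcases this with ⟨hd, _, _⟩ | hee
  · exact absurd hd (hdisj d (Sym2.mem_mk_left d f))
  · exact hee.symm

omit [Fintype V] in
lemma pairSub_surj (G : SimpleGraph V) (H : G.Subgraph) (φ : H.coe ≃g triEdgeGraph) :
    ∃ (T : Finset V) (e : Sym2 V) (hT : G.IsNClique 3 T) (he : e ∈ G.edgeSet),
      (∀ v ∈ e, v ∉ T) ∧ pairSub G T e hT he = H := by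
  set ψ : triEdgeGraph ≃g H.coe := φ.symm with hψ
  have hAdjiff : ∀ i j : Fin 5, H.Adj ↑(ψ i) ↑(ψ j) ↔ triEdgeGraph.Adj i j := by
    intro i j
    rw [← SimpleGraph.Subgraph.coe_adj]
    exact ψ.map_rel_iff
  have hne : ∀ i j : Fin 5, i ≠ j → (ψ i : V) ≠ (ψ j : V) := by
    intro i j hij h
    exact hij (ψ.toEquiv.injective (Subtype.ext h))
  have hrep : ∀ x, x ∈ H.verts → ∃ i : Fin 5, (ψ i : V) = x := by
    intro x hx
    exact ⟨φ ⟨x, hx⟩, congrArg Subtype.val (φ.toEquiv.symm_apply_apply ⟨x, hx⟩)⟩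
  have hT : G.IsNClique 3 {(ψ 0 : V), (ψ 1 : V), (ψ 2 : V)} := by
    refine is3Clique_triple_iff.mpr ⟨?_, ?_, ?_⟩
    · exact H.adj_sub ((hAdjiff 0 1).mpr (by decide))
    · exact H.adj_sub ((hAdjiff 0 2).mpr (by decide))
    · exact H.adj_sub ((hAdjiff 1 2).mpr (by decide))
  have he : s((ψ 3 : V), (ψ 4 : V)) ∈ G.edgeSet :=
    H.adj_sub ((hAdjiff 3 4).mpr (by decide))
  have hdisj : ∀ v ∈ s((ψ 3 : V), (ψ 4 : V)), v ∉ ({(ψ 0 : V), (ψ 1 : V), (ψ 2 : V)} : Finset V) := by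
    intro v hv hvT
    rcases Sym2.mem_iff.mp hv with rfl | rfl <;>
      · simp only [Finset.mem_insert, Finset.mem_singleton] at hvT
        rcases hvT with h | h | h
        · exact hne _ _ (by decide) h
        · exact hne _ _ (by decide) h
        · exact hne _ _ (by decide) h
  refine ⟨_, _, hT, he, hdisj, ?_⟩
  apply SimpleGraph.Subgraph.ext
  · ext x
    simp only [pairSub, Set.mem_union, Finset.coe_insert, Set.mem_insert_iff,
      Finset.coe_singleton, Set.mem_singleton_iff, Set.mem_setOf_eq, Sym2.mem_iff]
    constructor
    · rintro ((rfl | rfl | rfl) | (rfl | rfl)) <;> exact Subtype.coe_prop _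
    · intro hx
      obtain ⟨i, rfl⟩ := hrep x hx
      fin_cases i <;> simp
  · funext x y
    show ((x ∈ _ ∧ y ∈ _ ∧ x ≠ y) ∨ _ = s(x, y)) = H.Adj x y
    apply propext
    constructor
    · rintro (⟨hx, hy, hxy⟩ | heq)
      · have hx' : x = ↑(ψ 0) ∨ x = ↑(ψ 1) ∨ x = ↑(ψ 2) := by simpa using hx
        have hy' : y = ↑(ψ 0) ∨ y = ↑(ψ 1) ∨ y = ↑(ψ 2) := by simpa using hy
        rcases hx' with rfl | rfl | rfl <;> rcases hy' with rfl | rfl | rfl <;>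
          first
          | exact absurd rfl hxy
          | exact (hAdjiff _ _).mpr (by decide)
      · rcases Sym2.eq_iff.mp heq with ⟨rfl, rfl⟩ | ⟨rfl, rfl⟩
        · exact (hAdjiff 3 4).mpr (by decide)
        · exact (hAdjiff 4 3).mpr (by decide)
    · intro h
      obtain ⟨i, rfl⟩ := hrep x (H.edge_vert h)
      obtain ⟨j, rfl⟩ := hrep y (H.edge_vert h.symm)
      have ht := (hAdjiff i j).mp h
      fin_cases i <;> fin_cases j <;>
        first
        | exact absurd ht (by decide)
        | exact Or.inr rfl
        | exact Or.inr Sym2.eq_swap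
        | exact Or.inl ⟨by simp, by simp, hne _ _ (by decide)⟩

lemma copyCount_eq_sum (G : SimpleGraph V) [DecidableRel G.Adj] :
    copyCount G triEdgeGraph
      = ∑ T ∈ G.cliqueFinset 3, (G.edgeFinset.filter (fun e => ∀ v ∈ e, v ∉ T)).card := by
  classical
  have hcard : copyCount G triEdgeGraph
      = Nat.card {p : Finset V × Sym2 V //
          G.IsNClique 3 p.1 ∧ p.2 ∈ G.edgeSet ∧ ∀ v ∈ p.2, v ∉ p.1} := by
    refine (Nat.card_eq_of_bijective
      (fun p => (⟨pairSub G p.1.1 p.1.2 p.2.1 p.2.2.1,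
        pairSub_iso G p.1.1 p.1.2 p.2.1 p.2.2.1 p.2.2.2⟩ :
          {H : G.Subgraph // Nonempty (H.coe ≃g triEdgeGraph)})) ⟨?_, ?_⟩).symm
    · rintro ⟨⟨T, e⟩, hT, he, hd⟩ ⟨⟨T', e'⟩, hT', he', hd'⟩ hfe
      have := pairSub_inj G T T' e e' hT he hd hT' he' hd' (congrArg Subtype.val hfe)
      exact Subtype.ext (Prod.ext this.1 this.2)
    · rintro ⟨H, ⟨φ⟩⟩
      obtain ⟨T, e, hT, he, hd, heq⟩ := pairSub_surj G H φ
      exact ⟨⟨⟨T, e⟩, hT, he, hd⟩, Subtype.ext heq⟩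
  rw [hcard, Nat.card_eq_fintype_card, Fintype.card_subtype,
    Finset.card_filter, Fintype.sum_prod_type]
  have step : ∀ T : Finset V,
      (∑ e : Sym2 V, if G.IsNClique 3 T ∧ e ∈ G.edgeSet ∧ ∀ v ∈ e, v ∉ T then 1 else 0)
        = if G.IsNClique 3 T then (G.edgeFinset.filter (fun e => ∀ v ∈ e, v ∉ T)).card else 0 := by
    intro T
    by_cases hT : G.IsNClique 3 T
    · simp only [hT, true_and, if_true, Finset.card_filter]
      simp only [ite_and, ← SimpleGraph.mem_edgeFinset]
      rw [Finset.sum_ite_mem, Finset.univ_inter]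
    · simp [hT]
  rw [Finset.sum_congr rfl (fun T _ => step T), ← Finset.sum_filter]
  rfl

lemma edge_indicator (s t u x y : V) (hst : s ≠ t) (hsu : s ≠ u) (htu : t ≠ u) (hxy : x ≠ y) :
    (if ∀ v ∈ s(x,y), v ∉ ({s,t,u} : Finset V) then (1:ℚ) else 0)
      = 1 - (if s ∈ s(x,y) then (1:ℚ) else 0) - (if t ∈ s(x,y) then (1:ℚ) else 0)
        - (if u ∈ s(x,y) then (1:ℚ) else 0)
        + (if s(x,y) ∈ ({s(s,t), s(s,u), s(t,u)} : Finset (Sym2 V)) then (1:ℚ) else 0) := by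
  have hd : (∀ v ∈ s(x,y), v ∉ ({s,t,u} : Finset V))
      ↔ (x ∉ ({s,t,u} : Finset V) ∧ y ∉ ({s,t,u} : Finset V)) := by
    constructor
    · intro h; exact ⟨h x (Sym2.mem_mk_left x y), h y (Sym2.mem_mk_right x y)⟩
    · rintro ⟨h1, h2⟩ v hv
      rcases Sym2.mem_iff.mp hv with rfl | rfl
      · exact h1
      · exact h2
  rw [if_congr hd rfl rfl]
  simp only [Sym2.mem_iff, Finset.mem_insert, Finset.mem_singleton, Sym2.eq_iff]
  by_cases h1 : x = s <;> by_cases h2 : x = t <;> by_cases h3 : x = u <;>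
    by_cases h4 : y = s <;> by_cases h5 : y = t <;> by_cases h6 : y = u <;>
    first
      | (simp_all; done)
      | (simp_all [eq_comm]; done)

lemma disjCard (G : SimpleGraph V) [DecidableRel G.Adj] {s t u : V}
    (hst : G.Adj s t) (hsu : G.Adj s u) (htu : G.Adj t u) :
    ((G.edgeFinset.filter (fun e => ∀ v ∈ e, v ∉ ({s,t,u} : Finset V))).card : ℚ)
      = (G.edgeFinset.card : ℚ) - G.degree s - G.degree t - G.degree u + 3 := by
  have deg_eq : ∀ v : V, (G.degree v : ℚ) = ∑ e ∈ G.edgeFinset, if v ∈ e then (1:ℚ) else 0 := by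
    intro v
    rw [← SimpleGraph.card_incidenceFinset_eq_degree, SimpleGraph.incidenceFinset_eq_filter,
      Finset.card_filter]
    push_cast [apply_ite (Nat.cast : ℕ → ℚ)]
    rfl
  have hF3 : ∑ e ∈ G.edgeFinset,
      (if e ∈ ({s(s,t), s(s,u), s(t,u)} : Finset (Sym2 V)) then (1:ℚ) else 0) = 3 := by
    rw [Finset.sum_ite_mem]
    rw [Finset.inter_eq_right.mpr ?_, Finset.sum_const]
    · rw [Finset.card_insert_of_notMem, Finset.card_insert_of_notMem, Finset.card_singleton]
      · norm_num
      · simp [Sym2.eq_iff, hst.ne, hsu.ne, htu.ne, hst.ne.symm, hsu.ne.symm, htu.ne.symm]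
      · simp [Sym2.eq_iff, hst.ne, hsu.ne, htu.ne, hst.ne.symm, hsu.ne.symm, htu.ne.symm]
    · intro e he
      simp only [Finset.mem_insert, Finset.mem_singleton] at he
      rcases he with rfl | rfl | rfl <;> simpa [SimpleGraph.mem_edgeFinset] using ‹_›
  have key : ((G.edgeFinset.filter (fun e => ∀ v ∈ e, v ∉ ({s,t,u} : Finset V))).card : ℚ)
      = ∑ e ∈ G.edgeFinset, ((1:ℚ) - (if s ∈ e then (1:ℚ) else 0) - (if t ∈ e then (1:ℚ) else 0)
          - (if u ∈ e then (1:ℚ) else 0)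
          + (if e ∈ ({s(s,t), s(s,u), s(t,u)} : Finset (Sym2 V)) then (1:ℚ) else 0)) := by
    rw [Finset.card_filter]
    push_cast [apply_ite (Nat.cast : ℕ → ℚ)]
    refine Finset.sum_congr rfl ?_
    intro e he
    induction e using Sym2.ind with
    | _ x y =>
    have hxy : x ≠ y := (SimpleGraph.mem_edgeFinset.mp he).ne
    exact edge_indicator s t u x y hst.ne hsu.ne htu.ne hxy
  rw [key]
  simp only [Finset.sum_add_distrib, Finset.sum_sub_distrib, Finset.sum_const, nsmul_eq_mul,
    mul_one, hF3, ← deg_eq]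
  try ring

lemma fiber_eq (a b c : V) (hab : a ≠ b) (hac : a ≠ c) (hbc : b ≠ c) :
    (Finset.univ.filter (fun x : V × V × V => ({x.1, x.2.1, x.2.2} : Finset V) = {a, b, c}))
      = {(a,b,c), (a,c,b), (b,a,c), (b,c,a), (c,a,b), (c,b,a)} := by
  ext ⟨p1, p2, p3⟩
  simp only [Finset.mem_filter, Finset.mem_univ, true_and, Finset.mem_insert,
    Finset.mem_singleton, Prod.mk.injEq]
  constructor
  · intro h
    have hc3 : ({p1, p2, p3} : Finset V).card = 3 := by
      rw [h]
      rw [Finset.card_insert_of_notMem (by simp [hab, hac]),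
        Finset.card_insert_of_notMem (by simp [hbc]), Finset.card_singleton]
    have h12 : p1 ≠ p2 := by
      rintro rfl
      simp only [Finset.insert_idem] at hc3
      have := Finset.card_insert_le p1 ({p3} : Finset V)
      simp [Finset.card_singleton] at this
      omega
    have h13 : p1 ≠ p3 := by
      rintro rfl
      rw [show ({p1, p2, p1} : Finset V) = {p1, p2} by ext v; simp; try tauto] at hc3
      have := Finset.card_insert_le p1 ({p2} : Finset V)
      simp [Finset.card_singleton] at this
      omega
    have h23 : p2 ≠ p3 := by
      rintro rfl
      rw [show ({p1, p2, p2} : Finset V) = {p1, p2} by ext v; simp; try tauto] at hc3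
      have := Finset.card_insert_le p1 ({p2} : Finset V)
      simp [Finset.card_singleton] at this
      omega
    have hp1 : p1 = a ∨ p1 = b ∨ p1 = c := by
      have : p1 ∈ ({a,b,c} : Finset V) := h ▸ (by simp)
      simpa using this
    have hp2 : p2 = a ∨ p2 = b ∨ p2 = c := by
      have : p2 ∈ ({a,b,c} : Finset V) := h ▸ (by simp)
      simpa using this
    have hp3 : p3 = a ∨ p3 = b ∨ p3 = c := by
      have : p3 ∈ ({a,b,c} : Finset V) := h ▸ (by simp)
      simpa using this
    rcases hp1 with rfl | rfl | rfl <;> rcases hp2 with rfl | rfl | rfl <;>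
      rcases hp3 with rfl | rfl | rfl <;> simp_all
  · rintro (⟨rfl, rfl, rfl⟩ | ⟨rfl, rfl, rfl⟩ | ⟨rfl, rfl, rfl⟩ | ⟨rfl, rfl, rfl⟩ |
      ⟨rfl, rfl, rfl⟩ | ⟨rfl, rfl, rfl⟩) <;> (ext v; simp; try tauto)

lemma fiber_card (a b c : V) (hab : a ≠ b) (hac : a ≠ c) (hbc : b ≠ c) :
    (Finset.univ.filter (fun x : V × V × V => ({x.1, x.2.1, x.2.2} : Finset V) = {a, b, c})).card
      = 6 := by
  rw [fiber_eq a b c hab hac hbc]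
  rw [Finset.card_insert_of_notMem (by simp [Prod.ext_iff, hab, hac, hbc, hab.symm, hac.symm, hbc.symm]),
    Finset.card_insert_of_notMem (by simp [Prod.ext_iff, hab, hac, hbc, hab.symm, hac.symm, hbc.symm]),
    Finset.card_insert_of_notMem (by simp [Prod.ext_iff, hab, hac, hbc, hab.symm, hac.symm, hbc.symm]),
    Finset.card_insert_of_notMem (by simp [Prod.ext_iff, hab, hac, hbc, hab.symm, hac.symm, hbc.symm]),
    Finset.card_insert_of_notMem (by simp [Prod.ext_iff, hab, hac, hbc, hab.symm, hac.symm, hbc.symm]),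
    Finset.card_singleton]

lemma G6 (G : SimpleGraph V) [DecidableRel G.Adj] (w : Finset V → ℚ) :
    (∑ s : V, ∑ t : V, ∑ u : V,
      if G.Adj s t ∧ G.Adj s u ∧ G.Adj t u then w {s, t, u} else 0)
      = 6 * ∑ T ∈ G.cliqueFinset 3, w T := by
  classical
  have h1 : (∑ s : V, ∑ t : V, ∑ u : V,
      if G.Adj s t ∧ G.Adj s u ∧ G.Adj t u then w {s, t, u} else 0)
      = ∑ x : V × V × V,
        (if G.Adj x.1 x.2.1 ∧ G.Adj x.1 x.2.2 ∧ G.Adj x.2.1 x.2.2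
          then w {x.1, x.2.1, x.2.2} else 0) := by
    rw [Fintype.sum_prod_type]
    refine Finset.sum_congr rfl fun s _ => ?_
    rw [Fintype.sum_prod_type]
  rw [h1]
  rw [← Finset.sum_fiberwise_of_maps_to (g := fun x : V × V × V => ({x.1, x.2.1, x.2.2} : Finset V))
    (t := Finset.univ) (fun x _ => Finset.mem_univ _)]
  have h2 : ∀ T : Finset V,
      (∑ x ∈ Finset.univ.filter (fun x : V × V × V => ({x.1, x.2.1, x.2.2} : Finset V) = T),
        (if G.Adj x.1 x.2.1 ∧ G.Adj x.1 x.2.2 ∧ G.Adj x.2.1 x.2.2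
          then w {x.1, x.2.1, x.2.2} else 0))
      = if G.IsNClique 3 T then 6 * w T else 0 := by
    intro T
    by_cases hT : G.IsNClique 3 T
    · rw [if_pos hT]
      obtain ⟨a, b, c, hab, hac, hbc, rfl⟩ := Finset.card_eq_three.mp hT.2
      have : ∀ x ∈ Finset.univ.filter
          (fun x : V × V × V => ({x.1, x.2.1, x.2.2} : Finset V) = {a, b, c}),
          (if G.Adj x.1 x.2.1 ∧ G.Adj x.1 x.2.2 ∧ G.Adj x.2.1 x.2.2
            then w {x.1, x.2.1, x.2.2} else 0) = w {a, b, c} := by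
        intro x hx
        rw [fiber_eq a b c hab hac hbc] at hx
        have hclique := is3Clique_triple_iff.mp hT
        simp only [Finset.mem_insert, Finset.mem_singleton, Prod.ext_iff] at hx
        obtain ⟨x1, x2, x3⟩ := x
        rcases hx with ⟨rfl, rfl, rfl⟩ | ⟨rfl, rfl, rfl⟩ | ⟨rfl, rfl, rfl⟩ | ⟨rfl, rfl, rfl⟩ |
          ⟨rfl, rfl, rfl⟩ | ⟨rfl, rfl, rfl⟩ <;>
        · rw [if_pos (by
            obtain ⟨H1, H2, H3⟩ := hclique
            refine ⟨?_, ?_, ?_⟩ <;> first | exact H1 | exact H2 | exact H3 | exact H1.symm | exact H2.symm | exact H3.symm)]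
          try exact congrArg w (by ext v; simp; try tauto)
      rw [Finset.sum_congr rfl this, Finset.sum_const,
        fiber_card a b c hab hac hbc, nsmul_eq_mul]
      norm_num
    · rw [if_neg hT]
      refine Finset.sum_eq_zero fun x hx => ?_
      rw [Finset.mem_filter] at hx
      split_ifs with hadj
      · exact absurd (hx.2 ▸ is3Clique_triple_iff.mpr hadj) hT
      · rfl
  rw [Finset.sum_congr rfl fun T _ => h2 T, ← Finset.sum_filter]
  have hcf : Finset.univ.filter (G.IsNClique 3) = G.cliqueFinset 3 := by
    ext T; simp [SimpleGraph.mem_cliqueFinset_iff]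
  rw [hcf, Finset.mul_sum]

theorem stmt13 (G : SimpleGraph V) [DecidableRel G.Adj] :
    (copyCount G triEdgeGraph : ℚ) =
      (1 / 3) * edgeSum G (fun s t =>
        ∑ u ∈ G.neighborFinset s ∩ G.neighborFinset t,
          ((G.edgeFinset.card : ℚ) - deg G s - deg G t - deg G u + 3)) := by
  classical
  set m : ℚ := (G.edgeFinset.card : ℚ) with hm
  set w : Finset V → ℚ := fun T => m + 3 - ∑ v ∈ T, deg G v with hw
  -- LHS
  have hLHS : (copyCount G triEdgeGraph : ℚ) = ∑ T ∈ G.cliqueFinset 3, w T := by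
    rw [copyCount_eq_sum]
    push_cast
    refine Finset.sum_congr rfl fun T hT => ?_
    have hT' := SimpleGraph.mem_cliqueFinset_iff.mp hT
    obtain ⟨a, b, c, hab, hac, hbc, rfl⟩ := is3Clique_iff.mp hT'
    rw [disjCard G hab hac hbc]
    have hsum : ∑ v ∈ ({a, b, c} : Finset V), deg G v = deg G a + deg G b + deg G c := by
      rw [Finset.sum_insert (by simp [hab.ne, hac.ne]),
        Finset.sum_insert (by simp [hbc.ne]), Finset.sum_singleton]
      ring
    simp only [hw, hm]
    rw [hsum]
    simp only [deg]
    ring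
  -- RHS
  have hinner : ∀ s t : V, (if G.Adj s t then
      (∑ u ∈ G.neighborFinset s ∩ G.neighborFinset t,
        (m - deg G s - deg G t - deg G u + 3)) else 0)
      = ∑ u : V, (if G.Adj s t ∧ G.Adj s u ∧ G.Adj t u then w {s, t, u} else 0) := by
    intro s t
    by_cases hst : G.Adj s t
    · rw [if_pos hst]
      have hset : G.neighborFinset s ∩ G.neighborFinset t
          = Finset.univ.filter (fun u => G.Adj s u ∧ G.Adj t u) := by
        ext u
        simp [SimpleGraph.mem_neighborFinset]
      rw [hset, Finset.sum_filter]
      refine Finset.sum_congr rfl fun u _ => ?_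
      by_cases hu : G.Adj s u ∧ G.Adj t u
      · rw [if_pos hu, if_pos ⟨hst, hu⟩]
        have hsum : ∑ v ∈ ({s, t, u} : Finset V), deg G v = deg G s + deg G t + deg G u := by
          rw [Finset.sum_insert (by simp [hst.ne, hu.1.ne]),
            Finset.sum_insert (by simp [hu.2.ne]), Finset.sum_singleton]
          ring
        simp only [hw, hsum]
        ring
      · rw [if_neg hu, if_neg (by tauto)]
    · rw [if_neg hst]
      symm
      refine Finset.sum_eq_zero fun u _ => ?_
      rw [if_neg (by tauto)]
  rw [hLHS, edgeSum]
  rw [Finset.sum_congr rfl (fun s _ => Finset.sum_congr rfl (fun t _ => hinner s t))]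
  rw [G6 G w]
  ring

end CrossVar
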